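/- Let Ω ⊆ ℝᵈ be a bounded measurable set and let k ∈ L¹(ℝᵈ). Then the linear operator J on L²(Ω) defined by J[v](x) = ∫_Ω k(x-y) v(y) dy is a compact operator from L²(Ω) to L²(Ω). -/

import Mathlib

open MeasureTheory Bornology
open scoped ENNReal NNReal

namespace Stmt6

variable {d : ℕ}

/-- The nonlocal operator as a plain function. -/
noncomputable def Jfun (Ω : Set (Fin d → ℝ)) (k v : (Fin d → ℝ) → ℝ) (x : Fin d → ℝ) : ℝ :=
  ∫ y, k (x - y) * v y ∂(volume.restrict Ω)

/-- `L¹` norm of the kernel, as an extended real. -/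
noncomputable def Kn (k : (Fin d → ℝ) → ℝ) : ℝ≥0∞ := ∫⁻ z, (‖k z‖₊ : ℝ≥0∞) ∂volume

lemma qmp_sub (Ω : Set (Fin d → ℝ)) :
    Measure.QuasiMeasurePreserving (fun p : (Fin d → ℝ) × (Fin d → ℝ) => p.1 - p.2)
      ((volume.restrict Ω).prod (volume.restrict Ω)) volume := by
  refine (quasiMeasurePreserving_sub (volume : Measure (Fin d → ℝ)) volume).mono ?_
    Measure.AbsolutelyContinuous.rfl
  rw [Measure.prod_restrict]
  exact Measure.restrict_le_self.absolutelyContinuous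

lemma aesm_prod (Ω : Set (Fin d → ℝ)) {k v : (Fin d → ℝ) → ℝ}
    (hk : AEStronglyMeasurable k volume)
    (hv : AEStronglyMeasurable v (volume.restrict Ω)) :
    AEStronglyMeasurable (fun p : (Fin d → ℝ) × (Fin d → ℝ) => k (p.1 - p.2) * v p.2)
      ((volume.restrict Ω).prod (volume.restrict Ω)) := by
  have h1 : AEStronglyMeasurable (fun p : (Fin d → ℝ) × (Fin d → ℝ) => k (p.1 - p.2))
      ((volume.restrict Ω).prod (volume.restrict Ω)) :=
    hk.comp_quasiMeasurePreserving (qmp_sub Ω)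
  have h2 : AEStronglyMeasurable (fun p : (Fin d → ℝ) × (Fin d → ℝ) => v p.2)
      ((volume.restrict Ω).prod (volume.restrict Ω)) :=
    hv.comp_quasiMeasurePreserving Measure.quasiMeasurePreserving_snd
  exact h1.mul h2

lemma rpow_half_sq (a : ℝ≥0∞) : (a ^ (1/2 : ℝ)) ^ (2 : ℝ) = a := by
  rw [← ENNReal.rpow_mul]; norm_num

lemma half_mul_self (a : ℝ≥0∞) : a ^ (1/2 : ℝ) * a ^ (1/2 : ℝ) = a := by
  rw [← ENNReal.rpow_add_of_nonneg _ _ (by norm_num) (by norm_num)]; norm_num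

/-- Core Schur-test estimate. -/
lemma core_estimate (Ω : Set (Fin d → ℝ)) {k v : (Fin d → ℝ) → ℝ}
    (hk : Integrable k volume)
    (hv : AEStronglyMeasurable v (volume.restrict Ω)) :
    ∫⁻ x, (∫⁻ y, (‖k (x - y)‖₊ : ℝ≥0∞) * ‖v y‖₊ ∂(volume.restrict Ω)) ^ (2:ℝ)
        ∂(volume.restrict Ω)
      ≤ Kn k * Kn k * ∫⁻ y, (‖v y‖₊ : ℝ≥0∞) ^ (2:ℝ) ∂(volume.restrict Ω) := by
  set μ := volume.restrict Ω with hμ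
  set K : (Fin d → ℝ) → ℝ≥0∞ := fun z => (‖k z‖₊ : ℝ≥0∞) with hK
  set V : (Fin d → ℝ) → ℝ≥0∞ := fun y => (‖v y‖₊ : ℝ≥0∞) with hV
  have hKn_ne_top : Kn k ≠ ⊤ := hk.2.ne
  have hWaesm : AEStronglyMeasurable (fun p : (Fin d → ℝ) × (Fin d → ℝ) => k (p.1 - p.2))
      (μ.prod μ) := hk.1.comp_quasiMeasurePreserving (qmp_sub Ω)
  have hW : AEMeasurable (fun p : (Fin d → ℝ) × (Fin d → ℝ) => K (p.1 - p.2)) (μ.prod μ) :=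
    hWaesm.enorm
  have hVm : AEMeasurable V μ := hv.enorm
  -- translation bounds
  have hbound : ∀ x, ∫⁻ y, K (x - y) ∂μ ≤ Kn k := by
    intro x
    calc ∫⁻ y, K (x - y) ∂μ ≤ ∫⁻ y, K (x - y) ∂volume :=
          lintegral_mono' Measure.restrict_le_self le_rfl
    _ = Kn k := (Measure.measurePreserving_sub_left volume x).lintegral_comp_emb
          (MeasurableEquiv.subLeft x).measurableEmbedding K
  have hbound' : ∀ y, ∫⁻ x, K (x - y) ∂μ ≤ Kn k := by
    intro y
    calc ∫⁻ x, K (x - y) ∂μ ≤ ∫⁻ x, K (x - y) ∂volume :=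
          lintegral_mono' Measure.restrict_le_self le_rfl
    _ = Kn k := (measurePreserving_sub_right volume y).lintegral_comp_emb
          (MeasurableEquiv.subRight y).measurableEmbedding K
  -- a.e. slice measurability
  obtain ⟨G, hGmeas, hGae⟩ := hW
  have hslice : ∀ᵐ x ∂μ, AEMeasurable (fun y => K (x - y)) μ := by
    filter_upwards [Measure.ae_ae_of_ae_prod hGae] with x hx
    exact ⟨fun y => G (x, y), hGmeas.comp measurable_prodMk_left, hx⟩
  -- pointwise Cauchy-Schwarz
  have hCS : ∀ᵐ x ∂μ, (∫⁻ y, K (x - y) * V y ∂μ) ^ (2:ℝ)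
      ≤ Kn k * ∫⁻ y, K (x - y) * V y ^ (2:ℝ) ∂μ := by
    filter_upwards [hslice] with x hx
    have hf : AEMeasurable (fun y => (K (x - y)) ^ (1/2 : ℝ)) μ :=
      (ENNReal.continuous_rpow_const.measurable.comp_aemeasurable hx)
    have hg : AEMeasurable (fun y => (K (x - y)) ^ (1/2 : ℝ) * V y) μ := hf.mul hVm
    have h1 := ENNReal.lintegral_mul_le_Lp_mul_Lq μ
      Real.HolderConjugate.two_two hf hg
    have heq1 : ∀ y, ((fun y => (K (x - y)) ^ (1/2 : ℝ)) * fun y => (K (x - y)) ^ (1/2 : ℝ) * V y) y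
        = K (x - y) * V y := by
      intro y
      simp only [Pi.mul_apply]
      rw [← mul_assoc, half_mul_self]
    have heq2 : ∀ y, ((K (x - y)) ^ (1/2 : ℝ)) ^ (2:ℝ) = K (x - y) := fun y => rpow_half_sq _
    have heq3 : ∀ y, ((K (x - y)) ^ (1/2 : ℝ) * V y) ^ (2:ℝ) = K (x - y) * V y ^ (2:ℝ) := by
      intro y
      rw [ENNReal.mul_rpow_of_nonneg _ _ (by norm_num : (0:ℝ) ≤ 2), rpow_half_sq]
    rw [show (1/(2:ℝ)) = (1/2 : ℝ) by norm_num] at h1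
    simp only [heq1, heq2, heq3] at h1
    have h2 := ENNReal.rpow_le_rpow h1 (by norm_num : (0:ℝ) ≤ 2)
    calc (∫⁻ y, K (x - y) * V y ∂μ) ^ (2:ℝ)
        ≤ ((∫⁻ y, K (x - y) ∂μ) ^ (1/2:ℝ) * (∫⁻ y, K (x - y) * V y ^ (2:ℝ) ∂μ) ^ (1/2:ℝ)) ^ (2:ℝ) := h2
      _ = (∫⁻ y, K (x - y) ∂μ) * (∫⁻ y, K (x - y) * V y ^ (2:ℝ) ∂μ) := by
          rw [ENNReal.mul_rpow_of_nonneg _ _ (by norm_num : (0:ℝ) ≤ 2), rpow_half_sq, rpow_half_sq]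
      _ ≤ Kn k * ∫⁻ y, K (x - y) * V y ^ (2:ℝ) ∂μ :=
          mul_le_mul_left (hbound x) _
  -- integrate
  have hprodmeas : AEMeasurable
      (Function.uncurry fun x y => K (x - y) * V y ^ (2:ℝ)) (μ.prod μ) := by
    have : AEMeasurable (fun p : (Fin d → ℝ) × (Fin d → ℝ) => V p.2 ^ (2:ℝ)) (μ.prod μ) :=
      ENNReal.continuous_rpow_const.measurable.comp_aemeasurable
        (hVm.comp_quasiMeasurePreserving Measure.quasiMeasurePreserving_snd)
    have hW' : AEMeasurable (fun p : (Fin d → ℝ) × (Fin d → ℝ) => K (p.1 - p.2)) (μ.prod μ) :=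
      ⟨G, hGmeas, hGae⟩
    exact hW'.mul this
  calc ∫⁻ x, (∫⁻ y, K (x - y) * V y ∂μ) ^ (2:ℝ) ∂μ
      ≤ ∫⁻ x, Kn k * ∫⁻ y, K (x - y) * V y ^ (2:ℝ) ∂μ ∂μ := lintegral_mono_ae hCS
    _ = Kn k * ∫⁻ x, ∫⁻ y, K (x - y) * V y ^ (2:ℝ) ∂μ ∂μ :=
        lintegral_const_mul' _ _ hKn_ne_top
    _ = Kn k * ∫⁻ y, ∫⁻ x, K (x - y) * V y ^ (2:ℝ) ∂μ ∂μ := by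
        rw [lintegral_lintegral_swap hprodmeas]
    _ ≤ Kn k * ∫⁻ y, V y ^ (2:ℝ) * Kn k ∂μ := by
        refine mul_le_mul_right (lintegral_mono fun y => ?_) _
        have hVy : V y ^ (2:ℝ) ≠ ⊤ :=
          (ENNReal.rpow_lt_top_of_nonneg (by norm_num) ENNReal.coe_ne_top).ne
        calc ∫⁻ x, K (x - y) * V y ^ (2:ℝ) ∂μ
            = ∫⁻ x, V y ^ (2:ℝ) * K (x - y) ∂μ := by simp_rw [mul_comm]
          _ = V y ^ (2:ℝ) * ∫⁻ x, K (x - y) ∂μ := lintegral_const_mul' _ _ hVy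
          _ ≤ V y ^ (2:ℝ) * Kn k := mul_le_mul_right (hbound' y) _
    _ = Kn k * ((∫⁻ y, V y ^ (2:ℝ) ∂μ) * Kn k) := by
        rw [lintegral_mul_const' _ _ hKn_ne_top]
    _ = Kn k * Kn k * ∫⁻ y, V y ^ (2:ℝ) ∂μ := by ring

lemma pointwise_bound (Ω : Set (Fin d → ℝ)) (k v : (Fin d → ℝ) → ℝ) (x : Fin d → ℝ) :
    (‖Jfun Ω k v x‖₊ : ℝ≥0∞)
      ≤ ∫⁻ y, (‖k (x - y)‖₊ : ℝ≥0∞) * ‖v y‖₊ ∂(volume.restrict Ω) := by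
  calc (‖Jfun Ω k v x‖₊ : ℝ≥0∞)
      ≤ ∫⁻ y, (‖k (x - y) * v y‖₊ : ℝ≥0∞) ∂(volume.restrict Ω) :=
        enorm_integral_le_lintegral_enorm _
    _ = ∫⁻ y, (‖k (x - y)‖₊ : ℝ≥0∞) * ‖v y‖₊ ∂(volume.restrict Ω) := by
        simp_rw [nnnorm_mul, ENNReal.coe_mul]

lemma eLpNorm_Jfun_le (Ω : Set (Fin d → ℝ)) {k v : (Fin d → ℝ) → ℝ}
    (hk : Integrable k volume) (hv : AEStronglyMeasurable v (volume.restrict Ω)) :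
    eLpNorm (Jfun Ω k v) 2 (volume.restrict Ω) ≤ Kn k * eLpNorm v 2 (volume.restrict Ω) := by
  set μ := volume.restrict Ω
  rw [eLpNorm_eq_lintegral_rpow_enorm_toReal two_ne_zero ENNReal.ofNat_ne_top,
      eLpNorm_eq_lintegral_rpow_enorm_toReal two_ne_zero ENNReal.ofNat_ne_top]
  have htr : ((2:ℝ≥0∞).toReal) = (2:ℝ) := by simp
  rw [htr]
  have h1 : ∫⁻ x, (‖Jfun Ω k v x‖₊ : ℝ≥0∞) ^ (2:ℝ) ∂μ
      ≤ Kn k * Kn k * ∫⁻ y, (‖v y‖₊ : ℝ≥0∞) ^ (2:ℝ) ∂μ :=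
    le_trans (lintegral_mono fun x =>
      ENNReal.rpow_le_rpow (pointwise_bound Ω k v x) (by norm_num))
      (core_estimate Ω hk hv)
  calc (∫⁻ x, (‖Jfun Ω k v x‖₊ : ℝ≥0∞) ^ (2:ℝ) ∂μ) ^ (1/(2:ℝ))
      ≤ (Kn k * Kn k * ∫⁻ y, (‖v y‖₊ : ℝ≥0∞) ^ (2:ℝ) ∂μ) ^ (1/(2:ℝ)) :=
        ENNReal.rpow_le_rpow h1 (by norm_num)
    _ = Kn k * (∫⁻ y, (‖v y‖₊ : ℝ≥0∞) ^ (2:ℝ) ∂μ) ^ (1/(2:ℝ)) := by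
        rw [ENNReal.mul_rpow_of_nonneg _ _ (by norm_num : (0:ℝ) ≤ 1/2),
            ENNReal.mul_rpow_of_nonneg _ _ (by norm_num : (0:ℝ) ≤ 1/2),
            half_mul_self]

lemma memℒp_Jfun (Ω : Set (Fin d → ℝ)) {k v : (Fin d → ℝ) → ℝ}
    (hk : Integrable k volume) (hv : MemLp v 2 (volume.restrict Ω)) :
    MemLp (Jfun Ω k v) 2 (volume.restrict Ω) :=
  ⟨(aesm_prod Ω hk.1 hv.1).integral_prod_right',
    lt_of_le_of_lt (eLpNorm_Jfun_le Ω hk hv.1) (ENNReal.mul_lt_top hk.2 hv.2)⟩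

lemma lintegral_sq_lt_top (Ω : Set (Fin d → ℝ)) {v : (Fin d → ℝ) → ℝ}
    (hv : MemLp v 2 (volume.restrict Ω)) :
    ∫⁻ y, (‖v y‖₊ : ℝ≥0∞) ^ (2:ℝ) ∂(volume.restrict Ω) < ⊤ := by
  have h := hv.2
  rw [eLpNorm_eq_lintegral_rpow_enorm_toReal two_ne_zero ENNReal.ofNat_ne_top] at h
  have htr : ((2:ℝ≥0∞).toReal) = (2:ℝ) := by simp
  rw [htr] at h
  change (∫⁻ y, (‖v y‖₊ : ℝ≥0∞) ^ (2:ℝ) ∂(volume.restrict Ω)) ^ (1/(2:ℝ)) < ⊤ at h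
  by_contra hc
  rw [not_lt, top_le_iff] at hc
  rw [hc, ENNReal.top_rpow_of_pos (by norm_num)] at h
  exact (lt_irrefl _ h).elim

lemma ae_integrable (Ω : Set (Fin d → ℝ)) {k v : (Fin d → ℝ) → ℝ}
    (hk : Integrable k volume) (hv : MemLp v 2 (volume.restrict Ω)) :
    ∀ᵐ x ∂(volume.restrict Ω),
      Integrable (fun y => k (x - y) * v y) (volume.restrict Ω) := by
  set μ := volume.restrict Ω with hμdef
  set A : (Fin d → ℝ) → ℝ≥0∞ :=
    fun x => ∫⁻ y, (‖k (x - y)‖₊ : ℝ≥0∞) * ‖v y‖₊ ∂μ with hA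
  have hprod : AEStronglyMeasurable
      (fun p : (Fin d → ℝ) × (Fin d → ℝ) => k (p.1 - p.2) * v p.2) (μ.prod μ) :=
    aesm_prod Ω hk.1 hv.1
  have hprodE : AEMeasurable
      (fun p : (Fin d → ℝ) × (Fin d → ℝ) => (‖k (p.1 - p.2) * v p.2‖₊ : ℝ≥0∞)) (μ.prod μ) :=
    hprod.enorm
  obtain ⟨G, hGmeas, hGae⟩ := hprodE
  have hAmeas : AEMeasurable A μ := by
    refine ⟨fun x => ∫⁻ y, G (x, y) ∂μ, hGmeas.lintegral_prod_right', ?_⟩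
    filter_upwards [Measure.ae_ae_of_ae_prod hGae] with x hx
    have h' : A x = ∫⁻ y, (‖k (x - y) * v y‖₊ : ℝ≥0∞) ∂μ := by
      simp_rw [hA, nnnorm_mul, ENNReal.coe_mul]
    rw [h']
    exact lintegral_congr_ae hx
  have hfin : ∫⁻ x, A x ^ (2:ℝ) ∂μ ≠ ⊤ := by
    refine (lt_of_le_of_lt (core_estimate Ω hk hv.1) ?_).ne
    exact ENNReal.mul_lt_top (ENNReal.mul_lt_top hk.2 hk.2) (lintegral_sq_lt_top Ω hv)
  have hAlt : ∀ᵐ x ∂μ, A x ^ (2:ℝ) < ⊤ :=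
    ae_lt_top' (ENNReal.continuous_rpow_const.measurable.comp_aemeasurable hAmeas) hfin
  have hslice : ∀ᵐ x ∂μ, AEStronglyMeasurable (fun y => k (x - y) * v y) μ := by
    obtain ⟨G', hG'sm, hG'ae⟩ := hprod
    filter_upwards [Measure.ae_ae_of_ae_prod hG'ae] with x hx
    exact ⟨fun y => G' (x, y), hG'sm.comp_measurable measurable_prodMk_left, hx⟩
  filter_upwards [hAlt, hslice] with x h1 h2
  refine ⟨h2, ?_⟩
  have hAx : A x ≠ ⊤ := by
    intro h
    rw [h, ENNReal.top_rpow_of_pos (by norm_num)] at h1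
    exact (lt_irrefl _ h1).elim
  have h' : ∫⁻ y, (‖k (x - y) * v y‖₊ : ℝ≥0∞) ∂μ = A x := by
    simp_rw [hA, nnnorm_mul, ENNReal.coe_mul]
  change ∫⁻ y, (‖k (x - y) * v y‖₊ : ℝ≥0∞) ∂μ < ⊤
  rw [h']
  exact hAx.lt_top

lemma Jfun_congr (Ω : Set (Fin d → ℝ)) (k : (Fin d → ℝ) → ℝ) {v w : (Fin d → ℝ) → ℝ}
    (h : v =ᵐ[volume.restrict Ω] w) : Jfun Ω k v = Jfun Ω k w :=
  funext fun x => integral_congr_ae (h.mono fun y hy => by dsimp only; rw [hy])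

noncomputable def Jlin (Ω : Set (Fin d → ℝ)) (k : (Fin d → ℝ) → ℝ)
    (hk : Integrable k volume) :
    Lp ℝ 2 (volume.restrict Ω) →ₗ[ℝ] Lp ℝ 2 (volume.restrict Ω) where
  toFun v := (memℒp_Jfun Ω hk (Lp.memLp v)).toLp
  map_add' u v := by
    have h1 : Jfun Ω k (↑(u + v) : (Fin d → ℝ) → ℝ)
        = Jfun Ω k ((↑u : (Fin d → ℝ) → ℝ) + ↑v) := Jfun_congr Ω k (Lp.coeFn_add u v)
    have h2 : Jfun Ω k ((↑u : (Fin d → ℝ) → ℝ) + ↑v)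
        =ᵐ[volume.restrict Ω] Jfun Ω k ↑u + Jfun Ω k ↑v := by
      filter_upwards [ae_integrable Ω hk (Lp.memLp u), ae_integrable Ω hk (Lp.memLp v)]
        with x hxu hxv
      simp only [Jfun, Pi.add_apply]
      rw [← integral_add hxu hxv]
      congr 1
      funext y
      ring
    rw [← MemLp.toLp_add]
    exact MemLp.toLp_congr _ _ (by rw [h1]; exact h2)
  map_smul' c v := by
    have h1 : Jfun Ω k (↑(c • v) : (Fin d → ℝ) → ℝ)
        = Jfun Ω k (c • (↑v : (Fin d → ℝ) → ℝ)) := Jfun_congr Ω k (Lp.coeFn_smul c v)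
    have h2 : Jfun Ω k (c • (↑v : (Fin d → ℝ) → ℝ)) = c • Jfun Ω k ↑v := by
      funext x
      simp only [Jfun, Pi.smul_apply, smul_eq_mul]
      rw [← integral_const_mul]
      congr 1
      funext y
      ring
    simp only [RingHom.id_apply]
    rw [← MemLp.toLp_const_smul]
    exact MemLp.toLp_congr _ _ (by rw [h1, h2])

lemma Jlin_norm_le (Ω : Set (Fin d → ℝ)) (k : (Fin d → ℝ) → ℝ)
    (hk : Integrable k volume) (v : Lp ℝ 2 (volume.restrict Ω)) :
    ‖Jlin Ω k hk v‖ ≤ (Kn k).toReal * ‖v‖ := by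
  have h1 : Jlin Ω k hk v = (memℒp_Jfun Ω hk (Lp.memLp v)).toLp := rfl
  rw [h1, Lp.norm_toLp (Jfun Ω k ↑v) (memℒp_Jfun Ω hk (Lp.memLp v)),
    Lp.norm_def, ← ENNReal.toReal_mul]
  exact ENNReal.toReal_mono
    (ENNReal.mul_ne_top hk.2.ne (Lp.eLpNorm_ne_top v))
    (eLpNorm_Jfun_le Ω hk (Lp.aestronglyMeasurable v))

noncomputable def J (Ω : Set (Fin d → ℝ)) (k : (Fin d → ℝ) → ℝ)
    (hk : Integrable k volume) :
    Lp ℝ 2 (volume.restrict Ω) →L[ℝ] Lp ℝ 2 (volume.restrict Ω) :=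
  LinearMap.mkContinuous (Jlin Ω k hk) (Kn k).toReal (Jlin_norm_le Ω k hk)

lemma J_apply (Ω : Set (Fin d → ℝ)) (k : (Fin d → ℝ) → ℝ)
    (hk : Integrable k volume) (v : Lp ℝ 2 (volume.restrict Ω)) :
    (J Ω k hk v : (Fin d → ℝ) → ℝ) =ᵐ[volume.restrict Ω] Jfun Ω k ↑v :=
  MemLp.coeFn_toLp (memℒp_Jfun Ω hk (Lp.memLp v))

lemma J_norm_le (Ω : Set (Fin d → ℝ)) (k : (Fin d → ℝ) → ℝ) (hk : Integrable k volume) :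
    ‖J Ω k hk‖ ≤ (Kn k).toReal :=
  LinearMap.mkContinuous_norm_le _ ENNReal.toReal_nonneg _


section Part3
variable {d : ℕ}

lemma finite_meas (Ω : Set (Fin d → ℝ)) (hbd : IsBounded Ω) :
    IsFiniteMeasure (volume.restrict Ω) := by
  constructor
  rw [Measure.restrict_apply_univ]
  exact hbd.measure_lt_top

/-- `(volume Ω) ^ (1/2)` as a real number. -/
noncomputable def c₁ (Ω : Set (Fin d → ℝ)) : ℝ :=
  (((volume.restrict Ω) Set.univ) ^ (1/2 : ℝ)).toReal

lemma integrable_of_L2 (Ω : Set (Fin d → ℝ)) (hbd : IsBounded Ω)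
    (v : Lp ℝ 2 (volume.restrict Ω)) : Integrable (↑v : (Fin d → ℝ) → ℝ) (volume.restrict Ω) := by
  haveI := finite_meas Ω hbd
  exact memLp_one_iff_integrable.1 ((Lp.memLp v).mono_exponent one_le_two)

lemma integral_norm_le (Ω : Set (Fin d → ℝ)) (hbd : IsBounded Ω)
    (v : Lp ℝ 2 (volume.restrict Ω)) :
    ∫ y, ‖(v : (Fin d → ℝ) → ℝ) y‖ ∂(volume.restrict Ω) ≤ c₁ Ω * ‖v‖ := by
  haveI := finite_meas Ω hbd
  have h0 : ∫ y, ‖(v : (Fin d → ℝ) → ℝ) y‖ ∂(volume.restrict Ω) = (eLpNorm (↑v) 1 (volume.restrict Ω)).toReal := by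
    rw [integral_norm_eq_lintegral_enorm (Lp.aestronglyMeasurable v),
      eLpNorm_one_eq_lintegral_enorm]
  have h1 : eLpNorm (↑v : (Fin d → ℝ) → ℝ) 1 (volume.restrict Ω)
      ≤ eLpNorm (↑v : (Fin d → ℝ) → ℝ) 2 (volume.restrict Ω) * (volume.restrict Ω) Set.univ ^ (1/2 : ℝ) := by
    have := eLpNorm_le_eLpNorm_mul_rpow_measure_univ (p := 1) (q := 2)
      one_le_two (Lp.aestronglyMeasurable v)
    have he : (1 / (1:ℝ≥0∞).toReal - 1 / (2:ℝ≥0∞).toReal) = (1/2 : ℝ) := by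
      simp; norm_num
    rwa [he] at this
  have h2 : (volume.restrict Ω) Set.univ ^ (1/2 : ℝ) ≠ ⊤ :=
    (ENNReal.rpow_lt_top_of_nonneg (by norm_num) (measure_ne_top (volume.restrict Ω) _)).ne
  rw [h0, Lp.norm_def]
  unfold c₁
  calc (eLpNorm (↑v : (Fin d → ℝ) → ℝ) 1 (volume.restrict Ω)).toReal
      ≤ (eLpNorm (↑v : (Fin d → ℝ) → ℝ) 2 (volume.restrict Ω)
          * (volume.restrict Ω) Set.univ ^ (1/2 : ℝ)).toReal :=
        ENNReal.toReal_mono (ENNReal.mul_ne_top (Lp.eLpNorm_ne_top v) h2) h1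
    _ = ((volume.restrict Ω) Set.univ ^ (1/2 : ℝ)).toReal
          * (eLpNorm (↑v : (Fin d → ℝ) → ℝ) 2 (volume.restrict Ω)).toReal := by
        rw [ENNReal.toReal_mul]; ring

lemma compact_J_cont (Ω : Set (Fin d → ℝ)) (hΩ : MeasurableSet Ω) (hbd : IsBounded Ω)
    {k₀ : (Fin d → ℝ) → ℝ} (hc : Continuous k₀) (hsupp : HasCompactSupport k₀)
    (hk₀ : Integrable k₀ volume) : IsCompactOperator (J Ω k₀ hk₀) := by
  haveI := finite_meas Ω hbd
  set μ := volume.restrict Ω with hμdef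
  obtain ⟨C, hC⟩ := hc.bounded_above_of_compact_support hsupp
  have hC0 : 0 ≤ C := le_trans (norm_nonneg _) (hC 0)
  have hc₁0 : 0 ≤ c₁ Ω := ENNReal.toReal_nonneg
  -- slice integrability
  have hslice : ∀ (v : Lp ℝ 2 μ) (x : Fin d → ℝ),
      Integrable (fun y => k₀ (x - y) * (v : (Fin d → ℝ) → ℝ) y) μ := by
    intro v x
    refine Integrable.mono' ((integrable_of_L2 Ω hbd v).norm.const_mul C) ?_ ?_
    · exact ((hc.comp (continuous_const.sub continuous_id)).aestronglyMeasurable).mul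
        (Lp.aestronglyMeasurable v)
    · refine Filter.Eventually.of_forall fun y => ?_
      rw [norm_mul]
      exact mul_le_mul_of_nonneg_right (hC _) (norm_nonneg _)
  -- continuity of Jfun
  have hcont : ∀ v : Lp ℝ 2 μ, Continuous (Jfun Ω k₀ ↑v) := by
    intro v
    refine continuous_of_dominated (bound := fun y => C * ‖(v : (Fin d → ℝ) → ℝ) y‖)
      (fun x => (hslice v x).1) ?_ ((integrable_of_L2 Ω hbd v).norm.const_mul C) ?_
    · intro x
      refine Filter.Eventually.of_forall fun y => ?_
      rw [norm_mul]
      exact mul_le_mul_of_nonneg_right (hC _) (norm_nonneg _)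
    · refine Filter.Eventually.of_forall fun y => ?_
      exact (hc.comp (continuous_id.sub continuous_const)).mul continuous_const
  -- uniform bound
  have hub : ∀ (v : Lp ℝ 2 μ) (x : Fin d → ℝ), ‖Jfun Ω k₀ ↑v x‖ ≤ C * (c₁ Ω * ‖v‖) := by
    intro v x
    calc ‖Jfun Ω k₀ ↑v x‖ ≤ ∫ y, ‖k₀ (x - y) * (v : (Fin d → ℝ) → ℝ) y‖ ∂μ :=
          norm_integral_le_integral_norm _
      _ ≤ ∫ y, C * ‖(v : (Fin d → ℝ) → ℝ) y‖ ∂μ := by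
          refine integral_mono (hslice v x).norm
            ((integrable_of_L2 Ω hbd v).norm.const_mul C) fun y => ?_
          rw [norm_mul]
          exact mul_le_mul_of_nonneg_right (hC _) (norm_nonneg _)
      _ = C * ∫ y, ‖(v : (Fin d → ℝ) → ℝ) y‖ ∂μ := integral_const_mul _ _
      _ ≤ C * (c₁ Ω * ‖v‖) :=
          mul_le_mul_of_nonneg_left (integral_norm_le Ω hbd v) hC0
  -- uniform modulus of continuity
  have hu := (hsupp.uniformContinuous_of_continuous hc)
  rw [Metric.uniformContinuous_iff] at hu
  have key : ∀ ε₀ > (0:ℝ), ∃ δ > (0:ℝ), ∀ x x' : Fin d → ℝ, dist x x' < δ →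
      ∀ v : Lp ℝ 2 μ, ‖Jfun Ω k₀ ↑v x - Jfun Ω k₀ ↑v x'‖ ≤ ε₀ * (c₁ Ω * ‖v‖) := by
    intro ε₀ hε₀
    obtain ⟨δ, hδpos, hδ⟩ := hu ε₀ hε₀
    refine ⟨δ, hδpos, fun x x' hxx' v => ?_⟩
    have hsub : Jfun Ω k₀ ↑v x - Jfun Ω k₀ ↑v x'
        = ∫ y, (k₀ (x - y) - k₀ (x' - y)) * (v : (Fin d → ℝ) → ℝ) y ∂μ := by
      rw [Jfun, Jfun, ← integral_sub (hslice v x) (hslice v x')]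
      congr 1
      funext y
      ring
    have hint : Integrable (fun y => (k₀ (x - y) - k₀ (x' - y)) * (v : (Fin d → ℝ) → ℝ) y) μ := by
      have : (fun y => (k₀ (x - y) - k₀ (x' - y)) * (v : (Fin d → ℝ) → ℝ) y)
          = fun y => k₀ (x - y) * (v : (Fin d → ℝ) → ℝ) y
              - k₀ (x' - y) * (v : (Fin d → ℝ) → ℝ) y := by
        funext y; ring
      rw [this]
      exact (hslice v x).sub (hslice v x')
    rw [hsub]
    calc ‖∫ y, (k₀ (x - y) - k₀ (x' - y)) * (v : (Fin d → ℝ) → ℝ) y ∂μ‖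
        ≤ ∫ y, ‖(k₀ (x - y) - k₀ (x' - y)) * (v : (Fin d → ℝ) → ℝ) y‖ ∂μ :=
          norm_integral_le_integral_norm _
      _ ≤ ∫ y, ε₀ * ‖(v : (Fin d → ℝ) → ℝ) y‖ ∂μ := by
          refine integral_mono hint.norm
            ((integrable_of_L2 Ω hbd v).norm.const_mul ε₀) fun y => ?_
          rw [norm_mul]
          refine mul_le_mul_of_nonneg_right ?_ (norm_nonneg _)
          have hd : dist (x - y) (x' - y) < δ := by
            rw [dist_eq_norm, sub_sub_sub_cancel_right, ← dist_eq_norm]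
            exact hxx'
          have := hδ hd
          rw [dist_eq_norm] at this
          exact this.le
      _ = ε₀ * ∫ y, ‖(v : (Fin d → ℝ) → ℝ) y‖ ∂μ := integral_const_mul _ _
      _ ≤ ε₀ * (c₁ Ω * ‖v‖) :=
          mul_le_mul_of_nonneg_left (integral_norm_le Ω hbd v) hε₀.le
  -- the compact domain
  have hDcpt : IsCompact (closure Ω) := hbd.isCompact_closure
  haveI : CompactSpace (closure Ω) := isCompact_iff_compactSpace.mp hDcpt
  -- the map into bounded continuous functions
  set P : Lp ℝ 2 μ → BoundedContinuousFunction (closure Ω) ℝ := fun v =>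
    BoundedContinuousFunction.ofNormedAddCommGroup
      (fun z : closure Ω => Jfun Ω k₀ ↑v ↑z)
      ((hcont v).comp continuous_subtype_val)
      (C * (c₁ Ω * ‖v‖)) (fun z => hub v ↑z) with hP
  set A : Set (BoundedContinuousFunction (closure Ω) ℝ) := P '' Metric.closedBall 0 1 with hA
  -- Arzelà–Ascoli
  have hA_cpt : IsCompact (closure A) := by
    refine BoundedContinuousFunction.arzela_ascoli
      (Set.Icc (-(C * c₁ Ω)) (C * c₁ Ω)) isCompact_Icc A ?_ ?_
    · rintro f z ⟨v, hv, rfl⟩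
      rw [Set.mem_Icc, ← abs_le]
      have h1 : ‖v‖ ≤ 1 := by rwa [← mem_closedBall_zero_iff]
      have := hub v ↑z
      rw [Real.norm_eq_abs] at this
      refine le_trans this ?_
      have : c₁ Ω * ‖v‖ ≤ c₁ Ω * 1 := mul_le_mul_of_nonneg_left h1 hc₁0
      nlinarith
    · intro z
      rw [Metric.equicontinuousAt_iff]
      intro ε hε
      have hε₀pos : (0:ℝ) < ε / (2 * (c₁ Ω + 1)) := by positivity
      obtain ⟨δ, hδpos, hδ⟩ := key (ε / (2 * (c₁ Ω + 1))) hε₀pos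
      refine ⟨δ, hδpos, fun z' hzz' i => ?_⟩
      obtain ⟨v, hv, hPv⟩ := i.2
      have h1 : ‖v‖ ≤ 1 := by rwa [← mem_closedBall_zero_iff]
      have hdz : dist (z : Fin d → ℝ) (z' : Fin d → ℝ) < δ := by
        rw [← Subtype.dist_eq]
        rw [dist_comm] at hzz'
        exact hzz'
      have h2 := hδ (z : Fin d → ℝ) (z' : Fin d → ℝ) hdz v
      have h3 : dist ((i : BoundedContinuousFunction (closure Ω) ℝ) z)
          ((i : BoundedContinuousFunction (closure Ω) ℝ) z')
          = ‖Jfun Ω k₀ ↑v ↑z - Jfun Ω k₀ ↑v ↑z'‖ := by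
        rw [← hPv]
        rw [dist_eq_norm]
        rfl
      rw [h3]
      refine lt_of_le_of_lt h2 ?_
      have h4 : ε / (2 * (c₁ Ω + 1)) * (c₁ Ω * ‖v‖) ≤ ε / (2 * (c₁ Ω + 1)) * c₁ Ω := by
        refine mul_le_mul_of_nonneg_left ?_ hε₀pos.le
        nlinarith
      refine lt_of_le_of_lt h4 ?_
      rw [div_mul_eq_mul_div, div_lt_iff₀ (by positivity)]
      nlinarith
  have hA_tb : TotallyBounded A := TotallyBounded.subset subset_closure hA_cpt.totallyBounded
  -- transfer estimate
  have key2 : ∀ v w : Lp ℝ 2 μ, ∀ r : ℝ, 0 ≤ r → dist (P v) (P w) ≤ r →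
      ‖J Ω k₀ hk₀ v - J Ω k₀ hk₀ w‖ ≤ c₁ Ω * r := by
    intro v w r hr hdist
    have hae : (↑(J Ω k₀ hk₀ v - J Ω k₀ hk₀ w) : (Fin d → ℝ) → ℝ)
        =ᵐ[μ] Jfun Ω k₀ ↑v - Jfun Ω k₀ ↑w := by
      filter_upwards [Lp.coeFn_sub (J Ω k₀ hk₀ v) (J Ω k₀ hk₀ w),
        J_apply Ω k₀ hk₀ v, J_apply Ω k₀ hk₀ w] with x h1 h2 h3
      rw [h1, Pi.sub_apply, Pi.sub_apply, h2, h3]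
    have hbnd : ∀ᵐ x ∂μ, ‖(Jfun Ω k₀ ↑v - Jfun Ω k₀ ↑w) x‖ ≤ r := by
      filter_upwards [ae_restrict_mem hΩ] with x hx
      have hz : (x : Fin d → ℝ) ∈ closure Ω := subset_closure hx
      have := BoundedContinuousFunction.dist_coe_le_dist (f := P v) (g := P w) ⟨x, hz⟩
      have h2 : dist (P v ⟨x, hz⟩) (P w ⟨x, hz⟩) = ‖(Jfun Ω k₀ ↑v - Jfun Ω k₀ ↑w) x‖ := by
        rw [dist_eq_norm]
        rfl
      rw [h2] at this
      exact this.trans hdist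
    rw [Lp.norm_def, eLpNorm_congr_ae hae]
    have h5 := eLpNorm_le_of_ae_bound (p := 2) (μ := μ) hbnd
    have h6 : (μ Set.univ ^ ((2:ℝ≥0∞).toReal)⁻¹ * ENNReal.ofReal r).toReal ≤ c₁ Ω * r := by
      rw [ENNReal.toReal_mul, ENNReal.toReal_ofReal hr]
      have : ((2:ℝ≥0∞).toReal)⁻¹ = (1/2 : ℝ) := by norm_num
      rw [this]
      exact le_refl _
    refine le_trans (ENNReal.toReal_mono ?_ h5) h6
    exact ENNReal.mul_ne_top
      (ENNReal.rpow_lt_top_of_nonneg (by positivity) (measure_ne_top μ _)).ne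
      ENNReal.ofReal_ne_top
  -- total boundedness of the image
  have htb : TotallyBounded (⇑(J Ω k₀ hk₀) '' Metric.closedBall 0 1) := by
    rw [Metric.totallyBounded_iff]
    intro ε hε
    have hε'pos : (0:ℝ) < ε / (2 * (c₁ Ω + 1)) := by positivity
    rw [totallyBounded_iff_subset] at hA_tb
    obtain ⟨t, htA, htfin, htcov⟩ := hA_tb _ (Metric.dist_mem_uniformity hε'pos)
    have hchoice : ∀ f ∈ t, ∃ v, v ∈ Metric.closedBall (0 : Lp ℝ 2 μ) 1 ∧ P v = f :=
      fun f hf => htA hf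
    choose! w hw1 hw2 using hchoice
    refine ⟨(fun f => J Ω k₀ hk₀ (w f)) '' t, htfin.image _, ?_⟩
    rintro _ ⟨v, hv, rfl⟩
    have hPv : P v ∈ A := ⟨v, hv, rfl⟩
    obtain ⟨f, hf, hdistf⟩ := Set.mem_iUnion₂.1 (htcov hPv)
    have hdist2 : dist (P v) (P (w f)) < ε / (2 * (c₁ Ω + 1)) := by
      rw [hw2 f hf]
      exact hdistf
    rw [Set.mem_iUnion₂]
    refine ⟨J Ω k₀ hk₀ (w f), Set.mem_image_of_mem _ hf, ?_⟩
    rw [Metric.mem_ball, dist_eq_norm]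
    have h7 := key2 v (w f) (ε / (2 * (c₁ Ω + 1))) hε'pos.le hdist2.le
    refine lt_of_le_of_lt h7 ?_
    rw [mul_comm, div_mul_eq_mul_div, div_lt_iff₀ (by positivity)]
    nlinarith
  have hcl : IsCompact (closure (⇑(J Ω k₀ hk₀) '' Metric.closedBall 0 1)) :=
    TotallyBounded.isCompact_of_isClosed htb.closure isClosed_closure
  exact (isCompactOperator_iff_isCompact_closure_image_closedBall
    ((J Ω k₀ hk₀ : Lp ℝ 2 μ →L[ℝ] Lp ℝ 2 μ) : Lp ℝ 2 μ →ₗ[ℝ] Lp ℝ 2 μ) one_pos).mpr hcl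

end Part3

section Part4
variable {d : ℕ}

lemma Kn_eq (k : (Fin d → ℝ) → ℝ) : Kn k = eLpNorm k 1 volume :=
  (eLpNorm_one_eq_lintegral_enorm (f := k) (μ := volume)).symm

lemma J_sub (Ω : Set (Fin d → ℝ)) {k k' : (Fin d → ℝ) → ℝ}
    (hk : Integrable k volume) (hk' : Integrable k' volume)
    (v : Lp ℝ 2 (volume.restrict Ω)) :
    J Ω k hk v - J Ω k' hk' v = J Ω (k - k') (hk.sub hk') v := by
  apply Lp.ext
  filter_upwards [Lp.coeFn_sub (J Ω k hk v) (J Ω k' hk' v), J_apply Ω k hk v,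
    J_apply Ω k' hk' v, J_apply Ω (k - k') (hk.sub hk') v,
    ae_integrable Ω hk (Lp.memLp v), ae_integrable Ω hk' (Lp.memLp v)]
    with x h1 h2 h3 h4 hint1 hint2
  rw [h1, Pi.sub_apply, h2, h3, h4]
  simp only [Jfun]
  rw [← integral_sub hint1 hint2]
  congr 1
  funext y
  simp only [Pi.sub_apply]
  ring

lemma J_dist (Ω : Set (Fin d → ℝ)) {k k' : (Fin d → ℝ) → ℝ}
    (hk : Integrable k volume) (hk' : Integrable k' volume) :
    ‖J Ω k hk - J Ω k' hk'‖ ≤ (eLpNorm (k - k') 1 volume).toReal := by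
  refine ContinuousLinearMap.opNorm_le_bound _ ENNReal.toReal_nonneg fun v => ?_
  rw [ContinuousLinearMap.sub_apply, J_sub Ω hk hk' v]
  refine le_trans ((J Ω (k - k') (hk.sub hk')).le_opNorm v) ?_
  refine mul_le_mul_of_nonneg_right ?_ (norm_nonneg v)
  have := J_norm_le Ω (k - k') (hk.sub hk')
  rwa [Kn_eq] at this

end Part4

end Stmt6

open Stmt6 in
/-- For a bounded measurable `Ω ⊆ ℝᵈ` and `k ∈ L¹(ℝᵈ)`, the nonlocal operator
`J[v](x) = ∫_Ω k(x-y) v(y) dy` is a compact (bounded linear) operator on `L²(Ω)`. -/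
theorem stmt_6 (d : ℕ) (Ω : Set (Fin d → ℝ)) (hΩ : MeasurableSet Ω)
    (hbd : Bornology.IsBounded Ω)
    (k : (Fin d → ℝ) → ℝ) (hk : Integrable k) :
    ∃ T : Lp ℝ 2 (volume.restrict Ω) →L[ℝ] Lp ℝ 2 (volume.restrict Ω),
      IsCompactOperator T ∧
      ∀ v : Lp ℝ 2 (volume.restrict Ω),
        (T v : (Fin d → ℝ) → ℝ) =ᵐ[volume.restrict Ω]
          fun x => ∫ y in Ω, k (x - y) * v y := by
  classical
  refine ⟨J Ω k hk, ?_, fun v => J_apply Ω k hk v⟩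
  have hseq : ∀ n : ℕ, ∃ g : (Fin d → ℝ) → ℝ, HasCompactSupport g ∧
      eLpNorm (k - g) 1 volume ≤ ENNReal.ofReal (1 / (n + 1)) ∧ Continuous g ∧
      MemLp g 1 volume := by
    intro n
    exact (memLp_one_iff_integrable.2 hk).exists_hasCompactSupport_eLpNorm_sub_le
      ENNReal.one_ne_top (ne_of_gt (ENNReal.ofReal_pos.2 (by positivity)))
  choose g hg_supp hg_close hg_cont _hg_mem using hseq
  have hg_int : ∀ n, Integrable (g n) volume := fun n =>
    (hg_cont n).integrable_of_hasCompactSupport (hg_supp n)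
  have hcpt : ∀ n, IsCompactOperator (J Ω (g n) (hg_int n)) := fun n =>
    compact_J_cont Ω hΩ hbd (hg_cont n) (hg_supp n) (hg_int n)
  have hnorm : ∀ n : ℕ, ‖J Ω (g n) (hg_int n) - J Ω k hk‖ ≤ 1 / ((n : ℝ) + 1) := by
    intro n
    rw [norm_sub_rev]
    refine le_trans (J_dist Ω hk (hg_int n)) ?_
    refine le_trans (ENNReal.toReal_mono ENNReal.ofReal_ne_top (hg_close n)) ?_
    rw [ENNReal.toReal_ofReal (by positivity)]
  have htend : Filter.Tendsto (fun n => J Ω (g n) (hg_int n)) Filter.atTop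
      (nhds (J Ω k hk)) := by
    rw [tendsto_iff_norm_sub_tendsto_zero]
    exact squeeze_zero (fun n => norm_nonneg _) hnorm
      tendsto_one_div_add_atTop_nhds_zero_nat
  exact isCompactOperator_of_tendsto htend (Filter.Eventually.of_forall hcpt)
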